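/- Let G be a real Banach-Lie group, H a Banach-Lie subgroup, and I a bounded linear operator on g = Lie(G) with h ⊆ ker I, I(V) ⊆ V for a closed complement V of h, (I|_V)² = −id_V, and π ∘ I ∘ Ad_G(h)|_V = π ∘ Ad_G(h) ∘ I|_V for all h ∈ H (π : g → g/h the quotient map). Extend I complex-linearly to g_ℂ. Then for every h ∈ H and every v ∈ ker(I − i·id) ∩ V_ℂ, one has Ad_G(h)v ∈ h_ℂ + (ker(I − i·id) ∩ V_ℂ). In other words, the subspace k = h_ℂ + ker(I − i·id)∩V_ℂ is Ad_G(H)-invariant. -/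

import Mathlib

/-- Let `G` be a Banach-Lie group with Lie algebra `g`, `H` a Banach-Lie
subgroup, `I ∈ B(g)` with `h ⊆ ker I`, `I(V) ⊆ V` for a closed complement `V` of `h`,
`(I|_V)² = −id_V`, and `π∘I∘Ad(u)|_V = π∘Ad(u)∘I|_V` for all `u ∈ H`; extend
everything complex-linearly to `g_ℂ = h_ℂ ⊕ V_ℂ`.  Then for every `u ∈ H` and every
`v ∈ ker(I − i·id) ∩ V_ℂ` one has `Ad(u)v ∈ h_ℂ + (ker(I − i·id) ∩ V_ℂ)`; that is,
`k = h_ℂ + ker(I − i·id) ∩ V_ℂ` is `Ad(H)`-invariant. -/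
theorem stmt_19 {H gc : Type*} [Group H]
    [NormedAddCommGroup gc] [NormedSpace ℂ gc] [CompleteSpace gc]
    (hC VC : Submodule ℂ gc)
    (hhC_closed : IsClosed (hC : Set gc)) (hVC_closed : IsClosed (VC : Set gc))
    (hcompl : IsCompl hC VC)
    (I : gc →L[ℂ] gc)
    (hIh : ∀ z ∈ hC, I z = 0)
    (hIV : ∀ v ∈ VC, I v ∈ VC)
    (hI2 : ∀ v ∈ VC, I (I v) = -v)
    (Ad : H → gc →L[ℂ] gc)
    (hAd_one : ∀ z : gc, Ad 1 z = z)
    (hAd_mul : ∀ u u' : H, ∀ z : gc, Ad (u * u') z = Ad u (Ad u' z))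
    (hAdh : ∀ u : H, ∀ z ∈ hC, Ad u z ∈ hC)
    (hequiv : ∀ u : H, ∀ v ∈ VC, I (Ad u v) - Ad u (I v) ∈ hC) :
    ∀ u : H, ∀ v ∈ VC, I v = Complex.I • v →
      ∃ a ∈ hC, ∃ w ∈ VC, I w = Complex.I • w ∧ Ad u v = a + w := by
  intro u v hv hIv
  -- decompose Ad u v = a + w with a ∈ hC, w ∈ VC
  obtain ⟨a, w, ha, hw, hsum⟩ := Submodule.codisjoint_iff_exists_add_eq.mp hcompl.codisjoint (Ad u v)
  refine ⟨a, ha, w, hw, ?_, hsum.symm⟩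
  -- from hequiv: I (Ad u v) - Ad u (I v) ∈ hC
  have h0 := hequiv u v hv
  rw [hIv] at h0
  have hAdsmul : Ad u (Complex.I • v) = Complex.I • Ad u v := by
    simp [map_smul]
  rw [hAdsmul, ← hsum] at h0
  have hIa : I a = 0 := hIh a ha
  have hexp : I (a + w) - Complex.I • (a + w)
      = (I w - Complex.I • w) + (- (Complex.I • a)) := by
    rw [map_add, hIa, smul_add]; abel
  rw [hexp] at h0
  have hmem : I w - Complex.I • w ∈ hC := by
    have : (I w - Complex.I • w) + (- (Complex.I • a)) + Complex.I • a ∈ hC :=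
      hC.add_mem h0 (hC.smul_mem _ ha)
    simpa using this
  have hmemV : I w - Complex.I • w ∈ VC := VC.sub_mem (hIV w hw) (VC.smul_mem _ hw)
  have : I w - Complex.I • w = 0 := by
    have := hcompl.disjoint.eq_bot ▸ (Submodule.mem_inf.mpr ⟨hmem, hmemV⟩)
    simpa using this
  exact sub_eq_zero.mp this
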